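/- If a perfect separator exists in the RKHS (i.e., the margin ρ_K > 0), then there exists α ∈ ℝⁿ with Gα > 0 componentwise, where G is the normalized signed Gram matrix. -/

import Mathlib

open Matrix
open scoped RealInnerProductSpace

theorem stmt5 (n : ℕ) [NeZero n] {H : Type*} [NormedAddCommGroup H] [InnerProductSpace ℝ H]
    (v : Fin n → H) (hv : ∀ i, ‖v i‖ = 1)
    (G : Matrix (Fin n) (Fin n) ℝ) (hG : ∀ i j, G i j = ⟪v i, v j⟫)
    (ρ : ℝ) (hρ : ρ = ⨆ f : {f : H // ‖f‖ = 1}, ⨅ i, ⟪(f : H), v i⟫)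
    (hpos : 0 < ρ) :
    ∃ α : Fin n → ℝ, ∀ j, 0 < G.mulVec α j := by
  subst hρ
  have hne : Nonempty {f : H // ‖f‖ = 1} := ⟨⟨v 0, hv 0⟩⟩
  have hbdd : BddAbove (Set.range fun f : {f : H // ‖f‖ = 1} => ⨅ i, ⟪(f : H), v i⟫) := by
    refine ⟨1, ?_⟩
    rintro x ⟨f, rfl⟩
    calc ⨅ i, ⟪(f : H), v i⟫ ≤ ⟪(f : H), v 0⟫ :=
          ciInf_le (Finite.bddBelow_range _) 0
      _ ≤ ‖(f : H)‖ * ‖v 0‖ := real_inner_le_norm _ _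
      _ = 1 := by rw [f.2, hv 0, one_mul]
  obtain ⟨f, hf⟩ := (lt_ciSup_iff hbdd).mp hpos
  have hfi : ∀ i, 0 < ⟪(f : H), v i⟫ := fun i =>
    lt_of_lt_of_le hf (ciInf_le (Finite.bddBelow_range _) i)
  set S : Submodule ℝ H := Submodule.span ℝ (Set.range v)
  haveI : FiniteDimensional ℝ S := by
    apply FiniteDimensional.span_of_finite
    exact Set.finite_range v
  set p : H := (S.orthogonalProjectionOnto (f : H) : H)
  have hpS : p ∈ S := (S.orthogonalProjectionOnto (f : H)).2
  have hperp : (f : H) - p ∈ Sᗮ := Submodule.sub_starProjection_mem_orthogonal (K := S) _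
  have hvS : ∀ j, v j ∈ S := fun j => Submodule.subset_span ⟨j, rfl⟩
  have hinner : ∀ j, ⟪v j, p⟫ = ⟪v j, (f : H)⟫ := by
    intro j
    have := (Submodule.mem_orthogonal' S _).mp hperp (v j) (hvS j)
    have h2 : ⟪v j, (f : H) - p⟫ = 0 := by rw [real_inner_comm]; exact this
    rw [inner_sub_right] at h2
    linarith
  obtain ⟨α, hα⟩ := (Submodule.mem_span_range_iff_exists_fun ℝ).mp hpS
  refine ⟨α, fun j => ?_⟩
  have : G.mulVec α j = ⟪v j, p⟫ := by
    rw [← hα, inner_sum]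
    simp only [real_inner_smul_right]
    simp [Matrix.mulVec, dotProduct, hG, mul_comm]
  rw [this, hinner j, real_inner_comm]
  exact hfi j
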